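/- Let κ be an infinite cardinal and let B be an atomless Boolean algebra such that every subset of B of cardinality at most κ has a supremum (B is κ⁺-complete). Then there is no ultrafilter U on B with (U,≥) ≡_T (κ,≤), where κ carries its ordinal order. -/

import Mathlib

open Cardinal

/-- A subset `X` of a preorder is cofinal if every element has an upper bound in `X`. -/
def TCofinal {P : Type*} [Preorder P] (X : Set P) : Prop :=
  ∀ p : P, ∃ x ∈ X, p ≤ x

/-- A map is cofinal if it sends cofinal sets to cofinal sets. -/
def TCofinalMap {P Q : Type*} [Preorder P] [Preorder Q] (f : P → Q) : Prop :=
  ∀ X : Set P, TCofinal X → TCofinal (f '' X)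

/-- `P ≤_T Q`: there is a cofinal map from `Q` to `P`. -/
def TukeyLE (P Q : Type*) [Preorder P] [Preorder Q] : Prop :=
  ∃ f : Q → P, TCofinalMap f

/-- Tukey equivalence. -/
def TukeyEquiv (P Q : Type*) [Preorder P] [Preorder Q] : Prop :=
  TukeyLE P Q ∧ TukeyLE Q P

/-- An ultrafilter on a Boolean algebra `B`. -/
structure BAUltrafilter (B : Type*) [BooleanAlgebra B] where
  carrier : Set B
  bot_not_mem : ⊥ ∉ carrier
  inf_mem : ∀ a ∈ carrier, ∀ b ∈ carrier, a ⊓ b ∈ carrier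
  up_closed : ∀ a ∈ carrier, ∀ b : B, a ≤ b → b ∈ carrier
  mem_or_compl_mem : ∀ b : B, b ∈ carrier ∨ bᶜ ∈ carrier


theorem stmt4 {B : Type*} [BooleanAlgebra B] (κ : Cardinal) (hκ : ℵ₀ ≤ κ)
    (hatomless : ∀ b : B, ¬IsAtom b)
    (hcomplete : ∀ S : Set B, #↥S ≤ κ → ∃ b : B, IsLUB S b) :
    ¬∃ U : BAUltrafilter B, TukeyEquiv ((↥U.carrier)ᵒᵈ) κ.ord.ToType := by
  classical
  rintro ⟨U, ⟨f, hf⟩, -⟩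
  -- Basic ultrafilter facts
  have hne_bot : ∀ u ∈ U.carrier, u ≠ ⊥ := fun u hu h => U.bot_not_mem (h ▸ hu)
  have hself_bot : ∀ y : B, y ≤ yᶜ → y = ⊥ := by
    intro y h
    have : y ≤ ⊥ := by
      calc y = y ⊓ y := (inf_idem y).symm
        _ ≤ y ⊓ yᶜ := inf_le_inf_left y h
        _ = ⊥ := inf_compl_eq_bot
    exact le_bot_iff.1 this
  have hlb_bot : ∀ x : B, (∀ u ∈ U.carrier, x ≤ u) → x = ⊥ := by
    intro x hx
    rcases U.mem_or_compl_mem x with hxU | hxU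
    · exfalso
      have hxne : x ≠ ⊥ := hne_bot x hxU
      have h := hatomless x
      rw [IsAtom] at h; push_neg at h
      obtain ⟨b, hb1, hb2⟩ := h hxne
      rcases U.mem_or_compl_mem b with hbU | hbU
      · exact absurd (hx b hbU) hb1.not_ge
      · refine hb2 (le_bot_iff.1 ?_)
        calc b ≤ b ⊓ bᶜ := le_inf le_rfl (hb1.le.trans (hx _ hbU))
          _ = ⊥ := inf_compl_eq_bot
    · exact hself_bot x (hx _ hxU)
  -- The cofinal map, as a family of elements of U
  let F : (κ.ord.ToType) → B := fun α => ((OrderDual.ofDual (f α) : ↥U.carrier) : B)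
  have hFmem : ∀ α, F α ∈ U.carrier := fun α => (OrderDual.ofDual (f α)).2
  have hle_iff : ∀ (u : B) (hu : u ∈ U.carrier) (α : (κ.ord.ToType)),
      (OrderDual.toDual (⟨u, hu⟩ : ↥U.carrier) ≤ f α) ↔ F α ≤ u := fun _ _ _ => Iff.rfl
  -- the Tukey "threshold" function
  have ht : ∀ u ∈ U.carrier, ∃ β : (κ.ord.ToType), ∀ γ : (κ.ord.ToType), β ≤ γ → F γ ≤ u := by
    intro u hu
    by_contra hcon
    push_neg at hcon
    have hX : TCofinal {γ : (κ.ord.ToType) | ¬F γ ≤ u} := by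
      intro β
      obtain ⟨γ, h1, h2⟩ := hcon β
      exact ⟨γ, h2, h1⟩
    obtain ⟨x, ⟨γ, hγX, rfl⟩, hle⟩ := hf _ hX (OrderDual.toDual (⟨u, hu⟩ : ↥U.carrier))
    exact hγX hle
  choose t ht' using ht
  -- cofinality setup
  obtain ⟨S, hSunb, hScard⟩ := Order.exists_cof_eq (α := κ.ord.ToType)
  rw [Ordinal.cof_toType] at hScard
  have hlaminf : ℵ₀ ≤ (κ.ord.cof) := Ordinal.aleph0_le_cof.2 (Cardinal.isSuccLimit_ord hκ)
  have hlamle : (κ.ord.cof) ≤ κ := by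
    have := Ordinal.cof_le_card κ.ord
    rwa [Cardinal.card_ord] at this
  have heq : #((κ.ord.cof).ord.ToType) = #S := by rw [Cardinal.mk_ord_toType, hScard]
  obtain ⟨eqv⟩ := Cardinal.eq.1 heq
  let e : ((κ.ord.cof).ord.ToType) → (κ.ord.ToType) := fun i => (eqv i : (κ.ord.ToType))
  have hecof : ∀ α : (κ.ord.ToType), ∃ i : ((κ.ord.cof).ord.ToType), α ≤ e i := by
    intro α
    obtain ⟨b, hbS, hb⟩ := hSunb α
    refine ⟨eqv.symm ⟨b, hbS⟩, ?_⟩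
    have he : e (eqv.symm ⟨b, hbS⟩) = b := by
      show ((eqv (eqv.symm ⟨b, hbS⟩) : S) : (κ.ord.ToType)) = b
      rw [Equiv.apply_symm_apply]
    rw [he]
    exact hb
  have hbdd : ∀ T : Set (κ.ord.ToType), #T < (κ.ord.cof) → ∃ β : (κ.ord.ToType), ∀ γ ∈ T, γ ≤ β := by
    intro T hT
    by_contra hcon
    push_neg at hcon
    have hTc : IsCofinal T := fun a => by
      obtain ⟨γ, hγ, h'⟩ := hcon a
      exact ⟨γ, hγ, h'.le⟩
    have := Order.cof_le hTc
    rw [Ordinal.cof_toType] at this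
    exact absurd hT (not_lt.2 this)
  -- greatest lower bounds exist
  have hglb : ∀ T : Set B, #T ≤ κ → ∃ b : B, IsGLB T b := by
    intro T hT
    obtain ⟨b, hb⟩ := hcomplete (compl '' T) (Cardinal.mk_image_le.trans hT)
    refine ⟨bᶜ, ?_, ?_⟩
    · intro s hs
      have : sᶜ ≤ b := hb.1 ⟨s, hs, rfl⟩
      simpa using compl_le_compl this
    · intro c hc
      have : b ≤ cᶜ := hb.2 (by rintro x ⟨s, hs, rfl⟩; exact compl_le_compl (hc hs))
      simpa using compl_le_compl this
  -- the decreasing continuous chain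
  have hIiosmall : ∀ i : ((κ.ord.cof).ord.ToType), #(Set.Iio i) < (κ.ord.cof) := fun i => Cardinal.mk_Iio_ord_toType i
  have hCex : ∀ i : ((κ.ord.cof).ord.ToType), ∃ b : B, IsGLB ((fun j => F (e j)) '' Set.Iio i) b :=
    fun i => hglb _ (Cardinal.mk_image_le.trans ((hIiosmall i).le.trans hlamle))
  choose C hC using hCex
  have hCmem : ∀ i, C i ∈ U.carrier := by
    intro i
    obtain ⟨β, hβ⟩ := hbdd ((fun j => t (F (e j)) (hFmem (e j))) '' Set.Iio i)
      (Cardinal.mk_image_le.trans_lt (hIiosmall i))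
    have hlb : F β ∈ lowerBounds ((fun j => F (e j)) '' Set.Iio i) := by
      rintro x ⟨j, hj, rfl⟩
      exact ht' (F (e j)) (hFmem (e j)) β (hβ _ ⟨j, hj, rfl⟩)
    exact U.up_closed _ (hFmem β) _ ((hC i).2 hlb)
  have hCmono : ∀ {i j : ((κ.ord.cof).ord.ToType)}, i ≤ j → C j ≤ C i := by
    intro i j hij
    exact (hC i).2 fun x hx => (hC j).1 (Set.image_mono (Set.Iio_subset_Iio hij) hx)
  have hCleF : ∀ {j i : ((κ.ord.cof).ord.ToType)}, j < i → C i ≤ F (e j) := fun {j i} h => (hC i).1 ⟨j, h, rfl⟩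
  -- successor function on ((κ.ord.cof).ord.ToType)
  haveI : NoMaxOrder ((κ.ord.cof).ord.ToType) := Cardinal.noMaxOrder hlaminf
  have hwf : WellFounded ((· < ·) : ((κ.ord.cof).ord.ToType) → ((κ.ord.cof).ord.ToType) → Prop) := wellFounded_lt
  let sc : ((κ.ord.cof).ord.ToType) → ((κ.ord.cof).ord.ToType) := fun i => hwf.min {j | i < j} (exists_gt i)
  have hsc1 : ∀ i, i < sc i := fun i => hwf.min_mem _ _
  have hsc2 : ∀ {i j : ((κ.ord.cof).ord.ToType)}, i < j → sc i ≤ j := fun {i j} h => not_lt.1 (hwf.not_lt_min _ h)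
  -- the differences and their splittings
  let d : ((κ.ord.cof).ord.ToType) → B := fun i => C i ⊓ (C (sc i))ᶜ
  have hdC : ∀ i, d i ≤ C i := fun i => inf_le_left
  have hd_disj : ∀ {i j : ((κ.ord.cof).ord.ToType)}, i < j → d i ⊓ d j = ⊥ := by
    intro i j h
    have h1 : d j ≤ C (sc i) := (hdC j).trans (hCmono (hsc2 h))
    refine le_bot_iff.1 ?_
    calc d i ⊓ d j ≤ (C (sc i))ᶜ ⊓ C (sc i) := inf_le_inf inf_le_right h1
      _ = ⊥ := compl_inf_eq_bot
  have hd_compl : ∀ {i j : ((κ.ord.cof).ord.ToType)}, i ≠ j → d i ≤ (d j)ᶜ := by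
    intro i j h
    have hb : d i ⊓ d j = ⊥ := by
      rcases h.lt_or_gt with h' | h'
      · exact hd_disj h'
      · rw [inf_comm]; exact hd_disj h'
    calc d i = d i ⊓ (d j ⊔ (d j)ᶜ) := by rw [sup_compl_eq_top, inf_top_eq]
      _ = (d i ⊓ d j) ⊔ (d i ⊓ (d j)ᶜ) := inf_sup_left _ _ _
      _ ≤ (d j)ᶜ := by rw [hb]; simp
  have hsplit : ∀ i : ((κ.ord.cof).ord.ToType), ∃ x : B, x ≤ d i ∧ (d i ≠ ⊥ → x ≠ ⊥ ∧ x ≠ d i) := by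
    intro i
    by_cases h : d i = ⊥
    · exact ⟨⊥, bot_le, fun h' => absurd h h'⟩
    · have ha := hatomless (d i)
      rw [IsAtom] at ha; push_neg at ha
      obtain ⟨b, hb1, hb2⟩ := ha h
      exact ⟨b, hb1.le, fun _ => ⟨hb2, hb1.ne⟩⟩
  choose ee hee1 hee2 using hsplit
  -- the two big suprema
  have hMcard : #((κ.ord.cof).ord.ToType) ≤ κ := by rw [Cardinal.mk_ord_toType]; exact hlamle
  obtain ⟨A, hA⟩ := hcomplete (Set.range ee) (Cardinal.mk_range_le.trans hMcard)
  obtain ⟨Dd, hDd⟩ := hcomplete (Set.range d) (Cardinal.mk_range_le.trans hMcard)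
  -- the chain is cofinal in U (downwards)
  have hCcof : ∀ u ∈ U.carrier, ∃ i : ((κ.ord.cof).ord.ToType), C i ≤ u := by
    intro u hu
    obtain ⟨i, hi⟩ := hecof (t u hu)
    exact ⟨sc i, (hCleF (hsc1 i)).trans (ht' u hu (e i) hi)⟩
  -- every element of the chain is below the sup of differences
  have hCD : ∀ i : ((κ.ord.cof).ord.ToType), C i ≤ Dd := by
    intro i
    have hxlb : ∀ j : ((κ.ord.cof).ord.ToType), C i ⊓ Ddᶜ ≤ F (e j) := by
      intro j
      refine hwf.induction (C := fun j => C i ⊓ Ddᶜ ≤ F (e j)) j ?_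
      intro j IH
      have hxC : C i ⊓ Ddᶜ ≤ C j := (hC j).2 (by rintro x ⟨j', hj', rfl⟩; exact IH j' hj')
      have h1 : (C i ⊓ Ddᶜ) ⊓ (F (e j))ᶜ ≤ d j :=
        le_inf (inf_le_left.trans hxC)
          (inf_le_right.trans (compl_le_compl (hCleF (hsc1 j))))
      have h3 : (C i ⊓ Ddᶜ) ⊓ (F (e j))ᶜ = ⊥ := by
        refine le_bot_iff.1 ?_
        calc (C i ⊓ Ddᶜ) ⊓ (F (e j))ᶜ ≤ Dd ⊓ Ddᶜ :=
              le_inf (h1.trans (hDd.1 ⟨j, rfl⟩)) (inf_le_left.trans inf_le_right)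
          _ = ⊥ := inf_compl_eq_bot
      rw [← sdiff_eq] at h3
      exact sdiff_eq_bot_iff.1 h3
    have hxU : ∀ u ∈ U.carrier, C i ⊓ Ddᶜ ≤ u := by
      intro u hu
      obtain ⟨i₀, hi₀⟩ := hecof (t u hu)
      exact (hxlb i₀).trans (ht' u hu (e i₀) hi₀)
    have hx0 : C i ⊓ Ddᶜ = ⊥ := hlb_bot _ hxU
    rw [← sdiff_eq] at hx0
    exact sdiff_eq_bot_iff.1 hx0
  -- final case analysis on the sup of the splittings
  have hfinal : ∀ i : ((κ.ord.cof).ord.ToType), (∀ j, i ≤ j → d j = ⊥) → False := by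
    intro i hdbot
    have hDdle : Dd ≤ (C i)ᶜ := by
      refine hDd.2 ?_
      rintro x ⟨j, rfl⟩
      rcases le_or_gt i j with h | h
      · rw [hdbot j h]; exact bot_le
      · exact inf_le_right.trans (compl_le_compl (hCmono (hsc2 h)))
    exact hne_bot _ (hCmem i) (hself_bot _ ((hCD i).trans hDdle))
  rcases U.mem_or_compl_mem A with hAU | hAU
  · obtain ⟨i, hi⟩ := hCcof A hAU
    refine hfinal i ?_
    intro j hij
    by_contra hne
    obtain ⟨hene, heneq⟩ := hee2 j hne
    have hdjA : d j ≤ A := (hdC j).trans ((hCmono hij).trans hi)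
    have hAle : A ≤ ee j ⊔ (d j)ᶜ := by
      refine hA.2 ?_
      rintro x ⟨k, rfl⟩
      rcases eq_or_ne k j with rfl | hkj
      · exact le_sup_left
      · exact le_sup_of_le_right ((hee1 k).trans (hd_compl hkj))
    have hdlee : d j ≤ ee j := by
      have h0 : d j ≤ ee j ⊔ (d j)ᶜ := hdjA.trans hAle
      calc d j = d j ⊓ (ee j ⊔ (d j)ᶜ) := (inf_eq_left.2 h0).symm
        _ = (d j ⊓ ee j) ⊔ (d j ⊓ (d j)ᶜ) := inf_sup_left _ _ _
        _ ≤ ee j := by rw [inf_compl_eq_bot]; simp [inf_le_right]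
    exact heneq (le_antisymm (hee1 j) hdlee)
  · obtain ⟨i, hi⟩ := hCcof Aᶜ hAU
    refine hfinal i ?_
    intro j hij
    by_contra hne
    obtain ⟨hene, -⟩ := hee2 j hne
    have h1 : ee j ≤ A := hA.1 ⟨j, rfl⟩
    have h2 : ee j ≤ Aᶜ := (hee1 j).trans ((hdC j).trans ((hCmono hij).trans hi))
    refine hene (le_bot_iff.1 ?_)
    calc ee j ≤ A ⊓ Aᶜ := le_inf h1 h2
      _ = ⊥ := inf_compl_eq_bot
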